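/- arXiv:1905.03504 — 5 statements merged into one kernel-verified Lean document; each statement's English description precedes it below -/
import Mathlib

section
/- Let G be a discrete inverse semigroup with idempotent set E and associated character space X. Define G * X = {(g, x) : g ∈ G, x ∈ supp(1_{g*g})} with the product topology (G discrete), and the equivalence relation (g,x) ≡ (h,y) iff x = y and there exists e ∈ E with x ∈ supp(1_e) and g e = h e. Then for g ∈ G and open U ⊆ supp(1_{g*g}), the saturation π⁻¹(π({g} × U)) is open in G * X; consequently π({g} × U) is open in the quotient, and such sets generate the quotient topology. -/
/-- An inverse semigroup: a semigroup in which every element `g` has a unique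
generalized inverse `star g`. -/
class InverseSemigroup (G : Type*) extends Semigroup G where
  star : G → G
  mul_star_mul : ∀ g : G, g * star g * g = g
  star_mul_star : ∀ g : G, star g * g * star g = star g
  star_unique : ∀ g h : G, g * h * g = g → h * g * h = h → h = star g

open InverseSemigroup

variable (G : Type*) [InverseSemigroup G]

/-- Idempotents of the inverse semigroup. -/
def IsIdem (e : G) : Prop := e * e = e

/-- The character space `X` of `C*(E)`: nonzero `{0,1}`-valued multiplicative functions
on the semilattice `E` of idempotents, with the topology of pointwise convergence
(the Gelfand topology). A character `x` satisfies `x ∈ e` iff `x e = true`. -/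
def SgChar : Type _ :=
  {x : G → Bool // (∀ e f : G, IsIdem G e → IsIdem G f → x (e * f) = (x e && x f)) ∧
    ∃ e : G, IsIdem G e ∧ x e = true}

instance : TopologicalSpace (SgChar G) :=
  TopologicalSpace.induced Subtype.val (by infer_instance : TopologicalSpace (G → Bool))

/-- The space `G * X = {(g, x) : x ∈ supp (1_{g* g})}`, topologized as a subspace of
`G × X` with `G` discrete. -/
def GX : Type _ := {p : G × SgChar G // p.2.1 (star p.1 * p.1) = true}

instance : TopologicalSpace (GX G) :=
  TopologicalSpace.induced Subtype.val
    (@instTopologicalSpaceProd G (SgChar G) ⊥ inferInstance)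

/-- The equivalence `(g, x) ≡ (h, y)` iff `x = y` and `g e = h e` for some idempotent
`e` with `x ∈ e`. -/
def gxRel (p q : GX G) : Prop :=
  p.1.2 = q.1.2 ∧ ∃ e : G, IsIdem G e ∧ p.1.2.1 e = true ∧ p.1.1 * e = q.1.1 * e

/-- The groupoid associated to the inverse semigroup `G`: the quotient `(G * X)/≡`
with the quotient topology. -/
abbrev Gpd : Type _ := Quot (gxRel G)

/-- `E`-continuity of `G`: for every `g`, the pointwise supremum
`⋁ {1_e : e ∈ E, e ≤ g}` (the indicator of `{x : x e = true for some idempotent e ≤ g}`)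
is a continuous function on `X`. -/
def EContinuous : Prop :=
  ∀ g : G, Continuous
    ({x : SgChar G | ∃ e : G, IsIdem G e ∧ e = g * e ∧ x.1 e = true}.indicator
      (fun _ => (1 : ℝ)))


section Aux

namespace StmtAux

variable {G : Type*} [InverseSemigroup G]

lemma idem_star {e : G} (he : IsIdem G e) : InverseSemigroup.star e = e := by
  have h : e * e * e = e := by rw [he, he]
  exact (star_unique e e h h).symm

lemma idem_shift {e : G} (he : IsIdem G e) (z : G) : e * (e * z) = e * z := by
  rw [← mul_assoc, he]

lemma idem_mul {e f : G} (he : IsIdem G e) (hf : IsIdem G f) : IsIdem G (e * f) := by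
  set x := InverseSemigroup.star (e * f) with hx
  have m1 := mul_star_mul (e * f)
  have m2 := InverseSemigroup.star_mul_star (e * f)
  rw [← hx] at m1 m2
  have m1' := m1; simp only [mul_assoc] at m1'
  have r5 : ∀ z : G, x * (e * (f * (x * z))) = x * z := by
    intro z
    have := congrArg (· * z) m2
    simpa [mul_assoc] using this
  have key : f * x * e = x := by
    apply star_unique
    · simp only [mul_assoc, idem_shift hf, idem_shift he]
      exact m1'
    · simp only [mul_assoc, idem_shift he, idem_shift hf, r5]
  have hxi : IsIdem G x := by
    have h : f * x * e * (f * x * e) = f * x * e := by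
      simp only [mul_assoc, r5]
    rw [key] at h
    exact h
  have h2 : e * f = InverseSemigroup.star x := star_unique x (e * f) m2 m1
  have heq : e * f = x := h2.trans (idem_star hxi)
  rw [IsIdem, heq]
  exact hxi

lemma idem_comm {e f : G} (he : IsIdem G e) (hf : IsIdem G f) : e * f = f * e := by
  have hef := idem_mul he hf
  have hfe := idem_mul hf he
  have hef' : e * (f * (e * f)) = e * f := by
    have := hef; rw [IsIdem] at this; simpa [mul_assoc] using this
  have hfe' : f * (e * (f * e)) = f * e := by
    have := hfe; rw [IsIdem] at this; simpa [mul_assoc] using this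
  have h1 : e * f * (f * e) * (e * f) = e * f := by
    simp only [mul_assoc, idem_shift hf, idem_shift he, hef']
  have h2 : f * e * (e * f) * (f * e) = f * e := by
    simp only [mul_assoc, idem_shift he, idem_shift hf, hfe']
  have st := star_unique (e * f) (f * e) h1 h2
  rw [idem_star hef] at st
  exact st.symm

lemma star_mul_self_idem (g : G) : IsIdem G (InverseSemigroup.star g * g) := by
  show InverseSemigroup.star g * g * (InverseSemigroup.star g * g)
      = InverseSemigroup.star g * g
  rw [← mul_assoc, InverseSemigroup.star_mul_star]

lemma gxRel_equiv : Equivalence (gxRel G) := by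
  constructor
  · intro p
    exact ⟨rfl, InverseSemigroup.star p.1.1 * p.1.1, star_mul_self_idem _, p.2, rfl⟩
  · rintro p q ⟨h1, e, he, hxe, heq⟩
    exact ⟨h1.symm, e, he, h1 ▸ hxe, heq.symm⟩
  · rintro p q r ⟨h1, e, he, hxe, heq⟩ ⟨h2, f, hf, hyf, heq2⟩
    refine ⟨h1.trans h2, e * f, idem_mul he hf, ?_, ?_⟩
    · rw [p.1.2.2.1 e f he hf, hxe, h1, hyf]
      rfl
    · calc p.1.1 * (e * f) = p.1.1 * e * f := by rw [mul_assoc]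
        _ = q.1.1 * e * f := by rw [heq]
        _ = q.1.1 * (f * e) := by rw [mul_assoc, idem_comm he hf]
        _ = q.1.1 * f * e := by rw [mul_assoc]
        _ = r.1.1 * f * e := by rw [heq2]
        _ = r.1.1 * (e * f) := by rw [mul_assoc, idem_comm hf he]

lemma mem_sat {g : G} {U : Set (SgChar G)}
    (hsub : U ⊆ {x : SgChar G | x.1 (InverseSemigroup.star g * g) = true}) (p : GX G) :
    p ∈ (Quot.mk (gxRel G)) ⁻¹'
        ((Quot.mk (gxRel G)) '' {p : GX G | p.1.1 = g ∧ p.1.2 ∈ U}) ↔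
      p.1.2 ∈ U ∧ ∃ e : G, IsIdem G e ∧ p.1.2.1 e = true ∧ p.1.1 * e = g * e := by
  constructor
  · rintro ⟨q, ⟨hq1, hq2⟩, heq⟩
    have hrel : gxRel G q p := (gxRel_equiv.eqvGen_iff).mp (Quot.eq.mp heq)
    obtain ⟨h1, e, he, hxe, hme⟩ := hrel
    refine ⟨h1 ▸ hq2, e, he, h1 ▸ hxe, ?_⟩
    rw [← hme, hq1]
  · rintro ⟨hpU, e, he, hxe, hme⟩
    refine ⟨⟨(g, p.1.2), hsub hpU⟩, ⟨rfl, hpU⟩, ?_⟩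
    exact (Quot.sound ⟨rfl, e, he, hxe, hme⟩).symm

lemma eval_open (e : G) : IsOpen {x : SgChar G | x.1 e = true} := by
  have hc : Continuous (fun x : SgChar G => x.1 e) :=
    (continuous_apply e).comp continuous_induced_dom
  exact (isOpen_discrete ({true} : Set Bool)).preimage hc

lemma basic_open (h : G) {W : Set (SgChar G)} (hW : IsOpen W) :
    IsOpen {p : GX G | p.1.1 = h ∧ p.1.2 ∈ W} := by
  letI : TopologicalSpace G := ⊥
  haveI : DiscreteTopology G := ⟨rfl⟩
  have hopen : IsOpen (({h} : Set G) ×ˢ W) := (isOpen_discrete _).prod hW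
  have hmain := isOpen_induced (f := (Subtype.val : GX G → G × SgChar G)) hopen
  have hset : {p : GX G | p.1.1 = h ∧ p.1.2 ∈ W} =
      Subtype.val ⁻¹' (({h} : Set G) ×ˢ W) := by
    ext p
    simp only [Set.mem_preimage, Set.mem_prod, Set.mem_singleton_iff, Set.mem_setOf_eq]
    exact Iff.rfl
  rw [hset]
  exact hmain

lemma sat_open (g : G) (U : Set (SgChar G)) (hU : IsOpen U)
    (hsub : U ⊆ {x : SgChar G | x.1 (InverseSemigroup.star g * g) = true}) :
    IsOpen ((Quot.mk (gxRel G)) ⁻¹'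
      ((Quot.mk (gxRel G)) '' {p : GX G | p.1.1 = g ∧ p.1.2 ∈ U})) := by
  have hset : (Quot.mk (gxRel G)) ⁻¹'
      ((Quot.mk (gxRel G)) '' {p : GX G | p.1.1 = g ∧ p.1.2 ∈ U}) =
      ⋃ (h : G) (e : G) (_ : IsIdem G e ∧ h * e = g * e),
        {p : GX G | p.1.1 = h ∧ p.1.2 ∈ U ∩ {x : SgChar G | x.1 e = true}} := by
    ext p
    rw [mem_sat hsub p]
    simp only [Set.mem_iUnion, Set.mem_setOf_eq, Set.mem_inter_iff]
    constructor
    · rintro ⟨hpU, e, he, hxe, hme⟩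
      exact ⟨p.1.1, e, ⟨he, hme⟩, rfl, hpU, hxe⟩
    · rintro ⟨h, e, ⟨he, hme⟩, hph, hpU, hxe⟩
      exact ⟨hpU, e, he, hxe, by rw [hph, hme]⟩
  rw [hset]
  exact isOpen_iUnion fun h => isOpen_iUnion fun e => isOpen_iUnion fun _ =>
    basic_open h (hU.inter (eval_open e))

lemma img_open (g : G) (U : Set (SgChar G)) (hU : IsOpen U)
    (hsub : U ⊆ {x : SgChar G | x.1 (InverseSemigroup.star g * g) = true}) :
    IsOpen ((Quot.mk (gxRel G)) '' {p : GX G | p.1.1 = g ∧ p.1.2 ∈ U}) :=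
  isOpen_coinduced.mpr (sat_open g U hU hsub)

end StmtAux

end Aux

/-- Basic open sets of the associated groupoid: for `g ∈ G` and `U` open with
`U ⊆ supp (1_{g* g})`, the saturation `π⁻¹(π({g} × U))` is open in `G * X`; consequently
`π({g} × U)` is open in the quotient, and such sets generate the quotient topology. -/
theorem stmt14 {G : Type*} [InverseSemigroup G] (g : G) (U : Set (SgChar G))
    (hU : IsOpen U) (hsub : U ⊆ {x : SgChar G | x.1 (star g * g) = true}) :
    IsOpen ((Quot.mk (gxRel G)) ⁻¹'
        ((Quot.mk (gxRel G)) '' {p : GX G | p.1.1 = g ∧ p.1.2 ∈ U})) ∧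
    IsOpen ((Quot.mk (gxRel G)) '' {p : GX G | p.1.1 = g ∧ p.1.2 ∈ U}) ∧
    (inferInstance : TopologicalSpace (Gpd G)) = TopologicalSpace.generateFrom
      {V : Set (Gpd G) | ∃ (h : G) (W : Set (SgChar G)), IsOpen W ∧
        W ⊆ {x : SgChar G | x.1 (star h * h) = true} ∧
        V = (Quot.mk (gxRel G)) '' {p : GX G | p.1.1 = h ∧ p.1.2 ∈ W}} := by
  refine ⟨StmtAux.sat_open g U hU hsub, StmtAux.img_open g U hU hsub, ?_⟩
  refine le_antisymm (le_generateFrom ?_) ?_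
  · rintro V ⟨h, W, hW, hWsub, rfl⟩
    exact StmtAux.img_open h W hW hWsub
  · rw [TopologicalSpace.le_def]
    intro V hV
    letI : TopologicalSpace G := ⊥
    haveI : DiscreteTopology G := ⟨rfl⟩
    have hpre : IsOpen ((Quot.mk (gxRel G)) ⁻¹' V) := hV
    obtain ⟨T, hT, hTeq⟩ := isOpen_induced_iff.mp hpre
    have hVeq : V = ⋃ (h : G) (W : Set (SgChar G))
        (_ : IsOpen W ∧ W ⊆ {x : SgChar G | x.1 (star h * h) = true} ∧
          (Quot.mk (gxRel G)) '' {p : GX G | p.1.1 = h ∧ p.1.2 ∈ W} ⊆ V),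
        (Quot.mk (gxRel G)) '' {p : GX G | p.1.1 = h ∧ p.1.2 ∈ W} := by
      apply subset_antisymm
      · intro v hv
        obtain ⟨p, rfl⟩ := Quot.exists_rep v
        have hpT : p.1 ∈ T := by
          exact (Set.ext_iff.mp hTeq p).mpr hv
        obtain ⟨u, w, _, hw, hau, hbw, huw⟩ :=
          isOpen_prod_iff.mp hT p.1.1 p.1.2 hpT
        set W : Set (SgChar G) :=
          w ∩ {x : SgChar G | x.1 (star p.1.1 * p.1.1) = true} with hWdef
        have hWopen : IsOpen W := hw.inter (StmtAux.eval_open _)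
        have hWsub : W ⊆ {x : SgChar G | x.1 (star p.1.1 * p.1.1) = true} :=
          Set.inter_subset_right
        have himg : (Quot.mk (gxRel G)) ''
            {q : GX G | q.1.1 = p.1.1 ∧ q.1.2 ∈ W} ⊆ V := by
          rintro v' ⟨q, ⟨hq1, hq2⟩, rfl⟩
          have : q.1 ∈ T := huw ⟨hq1 ▸ hau, hq2.1⟩
          have : q ∈ (Quot.mk (gxRel G)) ⁻¹' V := by
            rw [← hTeq]; exact this
          exact this
        refine Set.mem_iUnion.mpr ⟨p.1.1, Set.mem_iUnion.mpr ⟨W,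
          Set.mem_iUnion.mpr ⟨⟨hWopen, hWsub, himg⟩, ?_⟩⟩⟩
        exact ⟨p, ⟨rfl, hbw, p.2⟩, rfl⟩
      · refine Set.iUnion_subset fun h => Set.iUnion_subset fun W =>
          Set.iUnion_subset fun hw => hw.2.2
    rw [hVeq]
    refine @isOpen_iUnion _ _ (TopologicalSpace.generateFrom _) _ fun h =>
      @isOpen_iUnion _ _ (TopologicalSpace.generateFrom _) _ fun W =>
      @isOpen_iUnion _ _ (TopologicalSpace.generateFrom _) _ fun hw =>
      TopologicalSpace.GenerateOpen.basic _ ⟨h, W, hw.1, hw.2.1, rfl⟩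
end

section
/- Let G be a discrete inverse semigroup. If G is E-continuous, then the groupoid (G * X)/≡ associated to G (with the quotient topology) is Hausdorff. -/
open InverseSemigroup

variable (G : Type*) [InverseSemigroup G]

namespace ISH

variable {G : Type*} [InverseSemigroup G]

lemma star_star (g : G) : star (star g) = g :=
  (star_unique (star g) g (star_mul_star g) (mul_star_mul g)).symm

lemma star_of_idem {e : G} (he : IsIdem G e) : star e = e := by
  have h : e * e * e = e := by rw [he, he]
  exact (star_unique e e h h).symm

lemma isIdem_star_mul (g : G) : IsIdem G (star g * g) := by
  show (star g * g) * (star g * g) = star g * g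
  calc (star g * g) * (star g * g) = star g * (g * star g * g) := by simp only [mul_assoc]
    _ = star g * g := by rw [mul_star_mul]

lemma isIdem_mul_star (g : G) : IsIdem G (g * star g) := by
  show (g * star g) * (g * star g) = g * star g
  calc (g * star g) * (g * star g) = (g * star g * g) * star g := by simp only [mul_assoc]
    _ = g * star g := by rw [mul_star_mul]

lemma isIdem_mul {e f : G} (he : IsIdem G e) (hf : IsIdem G f) : IsIdem G (e * f) := by
  set a := star (e * f) with ha
  have hex : ∀ x : G, e * (e * x) = e * x := fun x => by rw [← mul_assoc, he]
  have hfx : ∀ x : G, f * (f * x) = f * x := fun x => by rw [← mul_assoc, hf]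
  have h1 := mul_star_mul (e * f)
  have h2 := star_mul_star (e * f)
  rw [← ha] at h1 h2
  have h1n : e * (f * (a * (e * f))) = e * f := by simpa only [mul_assoc] using h1
  have h2x : ∀ x : G, a * (e * (f * (a * x))) = a * x := fun x => by
    have := congrArg (· * x) h2
    simpa only [mul_assoc] using this
  have step1 : f * a * e = a := by
    have hA : (e * f) * (f * a * e) * (e * f) = e * f := by
      simp only [mul_assoc]
      rw [hfx, hex]
      exact h1n
    have hB : (f * a * e) * (e * f) * (f * a * e) = f * a * e := by
      simp only [mul_assoc]
      rw [hex, hfx, h2x]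
    exact (star_unique (e * f) (f * a * e) hA hB).trans ha.symm
  have step2 : a * a = a := by
    calc a * a = (f * a * e) * (f * a * e) := by rw [step1]
      _ = f * (a * (e * (f * (a * e)))) := by simp only [mul_assoc]
      _ = f * (a * e) := by rw [h2x]
      _ = a := by rw [← mul_assoc, step1]
  have step3 : e * f = a := by
    have := star_unique a (e * f) h2 h1
    rwa [star_of_idem step2] at this
  show (e * f) * (e * f) = e * f
  rw [step3, step2]

lemma idem_comm {e f : G} (he : IsIdem G e) (hf : IsIdem G f) : e * f = f * e := by
  have hef := isIdem_mul he hf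
  have hfe := isIdem_mul hf he
  have hex : ∀ x : G, e * (e * x) = e * x := fun x => by rw [← mul_assoc, he]
  have hfx : ∀ x : G, f * (f * x) = f * x := fun x => by rw [← mul_assoc, hf]
  have hA : (e * f) * (f * e) * (e * f) = e * f := by
    simp only [mul_assoc]
    rw [hfx, hex]
    have hef' : (e * f) * (e * f) = e * f := hef
    simpa only [mul_assoc] using hef'
  have hB : (f * e) * (e * f) * (f * e) = f * e := by
    simp only [mul_assoc]
    rw [hex, hfx]
    have hfe' : (f * e) * (f * e) = f * e := hfe
    simpa only [mul_assoc] using hfe'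
  have h3 : f * e = star (e * f) := star_unique (e * f) (f * e) hA hB
  rw [h3, star_of_idem hef]

lemma idem_sandwich {e q : G} (he : IsIdem G e) (hq : IsIdem G q) : e * (q * e) = q * e := by
  calc e * (q * e) = (e * q) * e := (mul_assoc _ _ _).symm
    _ = (q * e) * e := by rw [idem_comm he hq]
    _ = q * (e * e) := mul_assoc _ _ _
    _ = q * e := by rw [he]

lemma star_mul (a b : G) : star (a * b) = star b * star a := by
  have hc := idem_comm (isIdem_mul_star b) (isIdem_star_mul a)
  have hA : (a * b) * (star b * star a) * (a * b) = a * b := by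
    calc (a * b) * (star b * star a) * (a * b)
        = a * (((b * star b) * (star a * a)) * b) := by simp only [mul_assoc]
      _ = a * (((star a * a) * (b * star b)) * b) := by rw [hc]
      _ = (a * star a * a) * (b * star b * b) := by simp only [mul_assoc]
      _ = a * b := by rw [mul_star_mul, mul_star_mul]
  have hB : (star b * star a) * (a * b) * (star b * star a) = star b * star a := by
    calc (star b * star a) * (a * b) * (star b * star a)
        = star b * (((star a * a) * (b * star b)) * star a) := by simp only [mul_assoc]
      _ = star b * (((b * star b) * (star a * a)) * star a) := by rw [← hc]
      _ = (star b * b * star b) * (star a * a * star a) := by simp only [mul_assoc]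
      _ = star b * star a := by rw [InverseSemigroup.star_mul_star, InverseSemigroup.star_mul_star]
  exact (star_unique (a * b) _ hA hB).symm

/-- Key: if `e` is idempotent and `e = (g* h) e` then `g e = h e`. -/
lemma key_back {g h e : G} (he : IsIdem G e) (hse : e = (star g * h) * e) : g * e = h * e := by
  have he' : e = e * (star h * g) := by
    have h0 := congrArg (InverseSemigroup.star : G → G) hse
    rw [star_of_idem he, star_mul, star_mul, star_star, star_of_idem he] at h0
    simpa only [mul_assoc] using h0
  have hk : IsIdem G (star h * h) := isIdem_star_mul h
  have hu : IsIdem G ((h * e) * star h) := by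
    show ((h * e) * star h) * ((h * e) * star h) = (h * e) * star h
    calc ((h * e) * star h) * ((h * e) * star h)
        = h * ((e * (star h * h)) * (e * star h)) := by simp only [mul_assoc]
      _ = h * (((star h * h) * e) * (e * star h)) := by rw [idem_comm he hk]
      _ = h * ((star h * h) * ((e * e) * star h)) := by simp only [mul_assoc]
      _ = (h * star h * h) * (e * star h) := by rw [he]; simp only [mul_assoc]
      _ = (h * e) * star h := by rw [mul_star_mul, mul_assoc]
  have h2 : h * e = ((h * e) * star h) * g := by
    calc h * e = h * (e * (star h * g)) := by rw [← he']
      _ = ((h * e) * star h) * g := by simp only [mul_assoc]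
  have hgg : IsIdem G (g * star g) := isIdem_mul_star g
  have h4 : g * e = ((h * e) * star h) * g := by
    calc g * e = g * ((star g * h) * e) := by rw [← hse]
      _ = (g * star g) * (h * e) := by simp only [mul_assoc]
      _ = (g * star g) * (((h * e) * star h) * g) := by conv_lhs => rw [h2]
      _ = ((g * star g) * ((h * e) * star h)) * g := by simp only [mul_assoc]
      _ = (((h * e) * star h) * (g * star g)) * g := by rw [idem_comm hgg hu]
      _ = ((h * e) * star h) * (g * star g * g) := by simp only [mul_assoc]
      _ = ((h * e) * star h) * g := by rw [mul_star_mul]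
  exact h4.trans h2.symm

/-- `(g* g) e` only depends on `g e` (for idempotent `e`). -/
lemma key_J {g g' e : G} (he : IsIdem G e) (heq : g * e = g' * e) :
    (star g * g) * e = (star g' * g') * e := by
  have H : ∀ c : G, star (c * e) * (c * e) = (star c * c) * e := by
    intro c
    rw [star_mul, star_of_idem he]
    calc (e * star c) * (c * e) = e * ((star c * c) * e) := by simp only [mul_assoc]
      _ = (star c * c) * e := idem_sandwich he (isIdem_star_mul c)
  rw [← H g, ← H g', heq]

/-- Forward: if `g e = h e` then `e' := e ((g* g)(h* h))` satisfies `e' = (g* h) e'`. -/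
lemma key_fwd {g h e : G} (he : IsIdem G e) (heq : g * e = h * e) :
    (star g * h) * (e * ((star g * g) * (star h * h))) = e * ((star g * g) * (star h * h)) := by
  have hf : IsIdem G (star g * g) := isIdem_star_mul g
  calc (star g * h) * (e * ((star g * g) * (star h * h)))
      = star g * ((h * e) * ((star g * g) * (star h * h))) := by simp only [mul_assoc]
    _ = star g * ((g * e) * ((star g * g) * (star h * h))) := by rw [← heq]
    _ = ((star g * g) * e) * ((star g * g) * (star h * h)) := by simp only [mul_assoc]
    _ = (e * (star g * g)) * ((star g * g) * (star h * h)) := by rw [idem_comm hf he]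
    _ = e * (((star g * g) * (star g * g)) * (star h * h)) := by simp only [mul_assoc]
    _ = e * ((star g * g) * (star h * h)) := by rw [hf]

end ISH
namespace ISH

variable {G : Type*} [InverseSemigroup G]

lemma rel_trans_key {g g' e1 e2 : G} (_ : IsIdem G e1) (_ : IsIdem G e2)
    (h1 : g * e1 = g' * e1) : g * (e1 * e2) = g' * (e1 * e2) := by
  calc g * (e1 * e2) = (g * e1) * e2 := (mul_assoc _ _ _).symm
    _ = (g' * e1) * e2 := by rw [h1]
    _ = g' * (e1 * e2) := mul_assoc _ _ _

lemma gxRel_equiv : Equivalence (gxRel G) := by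
  constructor
  · intro p
    exact ⟨rfl, star p.1.1 * p.1.1, isIdem_star_mul _, p.2, rfl⟩
  · rintro p q ⟨hx, e, he, hze, heq⟩
    exact ⟨hx.symm, e, he, by rw [← hx]; exact hze, heq.symm⟩
  · rintro p q r ⟨hx1, e1, he1, hz1, heq1⟩ ⟨hx2, e2, he2, hz2, heq2⟩
    refine ⟨hx1.trans hx2, e1 * e2, isIdem_mul he1 he2, ?_, ?_⟩
    · rw [p.1.2.2.1 e1 e2 he1 he2, hz1, Bool.true_and, hx1]
      exact hz2
    · have step1 : p.1.1 * (e1 * e2) = q.1.1 * (e1 * e2) := rel_trans_key he1 he2 heq1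
      have step2 : q.1.1 * (e2 * e1) = r.1.1 * (e2 * e1) := rel_trans_key he2 he1 heq2
      rw [step1, idem_comm he1 he2, step2]

lemma mk_eq_mk {p q : GX G} : Quot.mk (gxRel G) p = Quot.mk (gxRel G) q ↔ gxRel G p q :=
  ⟨fun h => (gxRel_equiv).eqvGen_iff.mp (Quot.eqvGen_exact h), Quot.sound⟩

end ISH

open ISH in
/-- If a discrete inverse semigroup `G` is `E`-continuous, then its associated groupoid
`(G * X)/≡` (with the quotient topology) is Hausdorff. -/
theorem stmt15 {G : Type*} [InverseSemigroup G] (h : EContinuous G) :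
    T2Space (Gpd G) := by
  letI : TopologicalSpace G := ⊥
  haveI : DiscreteTopology G := ⟨rfl⟩
  have contval : Continuous (Subtype.val : GX G → G × SgChar G) := continuous_induced_dom
  have cont1 : Continuous (fun p : GX G => p.1.1) := continuous_fst.comp contval
  have cont2 : Continuous (fun p : GX G => p.1.2) := continuous_snd.comp contval
  have contXval : Continuous (Subtype.val : SgChar G → G → Bool) := continuous_induced_dom
  have contev : ∀ e : G, Continuous (fun z : SgChar G => z.1 e) :=
    fun e => (continuous_apply e).comp contXval
  have hevopen : ∀ e : G, IsOpen {z : SgChar G | z.1 e = true} := fun e =>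
    IsOpen.preimage (contev e) (isOpen_discrete {true})
  -- the sets S_g are clopen by E-continuity
  have hSclosed : ∀ g : G,
      IsClosed {z : SgChar G | ∃ e, IsIdem G e ∧ e = g * e ∧ z.1 e = true} := by
    intro g
    have hc := h g
    have hpre : {z : SgChar G | ∃ e, IsIdem G e ∧ e = g * e ∧ z.1 e = true} =
        ({z : SgChar G | ∃ e, IsIdem G e ∧ e = g * e ∧ z.1 e = true}.indicator
          (fun _ => (1 : ℝ))) ⁻¹' (Set.Ici (1/2)) := by
      ext z
      by_cases hz : z ∈ {z : SgChar G | ∃ e, IsIdem G e ∧ e = g * e ∧ z.1 e = true} <;>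
        simp [Set.indicator_apply, hz] <;> norm_num
    rw [hpre]
    exact IsClosed.preimage hc isClosed_Ici
  -- X is Hausdorff
  haveI hT2X : T2Space (SgChar G) := by
    have hemb : Topology.IsEmbedding (Subtype.val : SgChar G → G → Bool) :=
      ⟨⟨rfl⟩, Subtype.val_injective⟩
    exact hemb.t2Space
  -- separation framework via saturated open sets
  have sep : ∀ (p q : GX G) (U V : Set (GX G)), IsOpen U → IsOpen V →
      (∀ a b, gxRel G a b → a ∈ U → b ∈ U) → (∀ a b, gxRel G a b → a ∈ V → b ∈ V) →
      p ∈ U → q ∈ V → U ∩ V = ∅ →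
      ∃ u v : Set (Gpd G), IsOpen u ∧ IsOpen v ∧
        Quot.mk (gxRel G) p ∈ u ∧ Quot.mk (gxRel G) q ∈ v ∧ Disjoint u v := by
    intro p q U V hU hV sU sV hp hq hdis
    have him : ∀ (W : Set (GX G)), (∀ a b, gxRel G a b → a ∈ W → b ∈ W) →
        Quot.mk (gxRel G) ⁻¹' (Quot.mk (gxRel G) '' W) = W := by
      intro W sW
      ext z
      constructor
      · rintro ⟨w, hw, hwz⟩
        exact sW w z (mk_eq_mk.mp hwz) hw
      · exact fun hz => ⟨z, hz, rfl⟩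
    refine ⟨Quot.mk _ '' U, Quot.mk _ '' V, ?_, ?_, ⟨p, hp, rfl⟩, ⟨q, hq, rfl⟩, ?_⟩
    · exact isQuotientMap_quot_mk.isOpen_preimage.mp (by rw [him U sU]; exact hU)
    · exact isQuotientMap_quot_mk.isOpen_preimage.mp (by rw [him V sV]; exact hV)
    · rw [Set.disjoint_left]
      rintro c ⟨w, hw, rfl⟩ ⟨w', hw', hww⟩
      have hww' : gxRel G w' w := mk_eq_mk.mp hww
      have hmem : w ∈ U ∩ V := ⟨hw, sV w' w hww' hw'⟩
      rw [hdis] at hmem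
      exact hmem
  constructor
  intro a b hab
  obtain ⟨p, rfl⟩ := Quot.exists_rep a
  obtain ⟨q, rfl⟩ := Quot.exists_rep b
  by_cases hxy : p.1.2 = q.1.2
  · -- same character, different germ
    have hnrel : ¬ gxRel G p q := fun hr => hab (Quot.sound hr)
    set S : Set (SgChar G) :=
      {z : SgChar G | ∃ e, IsIdem G e ∧ e = (star p.1.1 * q.1.1) * e ∧ z.1 e = true} with hS
    have hxS : p.1.2 ∉ S := by
      rintro ⟨e, he, hse, hxe⟩
      exact hnrel ⟨hxy, e, he, hxe, key_back he hse⟩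
    set Sat : G → Set (GX G) :=
      fun g0 => {p' | ∃ e, IsIdem G e ∧ p'.1.2.1 e = true ∧ p'.1.1 * e = g0 * e} with hSat
    have hSatOpen : ∀ g0, IsOpen (Sat g0) := by
      intro g0
      rw [isOpen_iff_forall_mem_open]
      rintro p' ⟨e, he, hze, heq⟩
      refine ⟨{p'' | p''.1.1 = p'.1.1} ∩ {p'' | p''.1.2.1 e = true}, ?_, ?_, rfl, hze⟩
      · rintro p'' ⟨h1, h2⟩
        exact ⟨e, he, h2, by rw [h1]; exact heq⟩
      · exact (IsOpen.preimage cont1 (isOpen_discrete {p'.1.1})).inter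
          (IsOpen.preimage cont2 (hevopen e))
    have hSatSat : ∀ g0 a b, gxRel G a b → a ∈ Sat g0 → b ∈ Sat g0 := by
      rintro g0 a b ⟨hab2, e2, he2, hze2, heq2⟩ ⟨e1, he1, hze1, heq1⟩
      refine ⟨e2 * e1, isIdem_mul he2 he1, ?_, ?_⟩
      · rw [← hab2, a.1.2.2.1 e2 e1 he2 he1, hze2, hze1]
        rfl
      · calc b.1.1 * (e2 * e1) = a.1.1 * (e2 * e1) := (rel_trans_key he2 he1 heq2).symm
          _ = a.1.1 * (e1 * e2) := by rw [idem_comm he2 he1]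
          _ = g0 * (e1 * e2) := rel_trans_key he1 he2 heq1
          _ = g0 * (e2 * e1) := by rw [idem_comm he1 he2]
    have hScompSat : ∀ a b : GX G, gxRel G a b → a.1.2 ∉ S → b.1.2 ∉ S := by
      intro a b hr ha
      rw [← hr.1]; exact ha
    refine sep p q (Sat p.1.1 ∩ {p' | p'.1.2 ∉ S}) (Sat q.1.1 ∩ {p' | p'.1.2 ∉ S})
      ?_ ?_ ?_ ?_ ?_ ?_ ?_
    · exact (hSatOpen p.1.1).inter
        (IsOpen.preimage cont2 (hSclosed (star p.1.1 * q.1.1)).isOpen_compl)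
    · exact (hSatOpen q.1.1).inter
        (IsOpen.preimage cont2 (hSclosed (star p.1.1 * q.1.1)).isOpen_compl)
    · rintro a' b' hr ⟨h1, h2⟩
      exact ⟨hSatSat p.1.1 a' b' hr h1, hScompSat a' b' hr h2⟩
    · rintro a' b' hr ⟨h1, h2⟩
      exact ⟨hSatSat q.1.1 a' b' hr h1, hScompSat a' b' hr h2⟩
    · exact ⟨⟨star p.1.1 * p.1.1, isIdem_star_mul _, p.2, rfl⟩, hxS⟩
    · refine ⟨⟨star q.1.1 * q.1.1, isIdem_star_mul _, q.2, rfl⟩, ?_⟩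
      show q.1.2 ∉ S
      rw [← hxy]; exact hxS
    · -- disjointness: a common point would witness membership of its character in S
      rw [Set.eq_empty_iff_forall_notMem]
      rintro p' ⟨⟨⟨e1, he1, hz1, hq1⟩, hns⟩, ⟨e2, he2, hz2, hq2⟩, -⟩
      have he : IsIdem G (e1 * e2) := isIdem_mul he1 he2
      have hze : p'.1.2.1 (e1 * e2) = true := by
        rw [p'.1.2.2.1 e1 e2 he1 he2, hz1, hz2]
        rfl
      have hge : p.1.1 * (e1 * e2) = p'.1.1 * (e1 * e2) := (rel_trans_key he1 he2 hq1).symm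
      have hghe : q.1.1 * (e1 * e2) = p'.1.1 * (e1 * e2) := by
        rw [idem_comm he1 he2]
        exact (rel_trans_key he2 he1 hq2).symm
      have heq : p.1.1 * (e1 * e2) = q.1.1 * (e1 * e2) := hge.trans hghe.symm
      have hval : ∀ c : G,
          p'.1.2.1 ((star c * c) * (e1 * e2)) = (p'.1.2.1 (star c * c) && true) := fun c => by
        rw [p'.1.2.2.1 _ _ (isIdem_star_mul c) he, hze]
      have hzf : p'.1.2.1 (star p.1.1 * p.1.1) = true := by
        have h0 : (p'.1.2.1 (star p.1.1 * p.1.1) && true) = (true && true) := by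
          rw [← hval p.1.1, key_J he hge, hval p'.1.1, p'.2]
        simpa using h0
      have hzk : p'.1.2.1 (star q.1.1 * q.1.1) = true := by
        have h0 : (p'.1.2.1 (star q.1.1 * q.1.1) && true) = (true && true) := by
          rw [← hval q.1.1, key_J he hghe, hval p'.1.1, p'.2]
        simpa using h0
      apply hns
      refine ⟨(e1 * e2) * ((star p.1.1 * p.1.1) * (star q.1.1 * q.1.1)),
        isIdem_mul he (isIdem_mul (isIdem_star_mul _) (isIdem_star_mul _)),
        (key_fwd he heq).symm, ?_⟩
      rw [p'.1.2.2.1 _ _ he (isIdem_mul (isIdem_star_mul _) (isIdem_star_mul _)), hze,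
        p'.1.2.2.1 _ _ (isIdem_star_mul _) (isIdem_star_mul _), hzf, hzk]
      rfl
  · -- different characters: separate in X
    obtain ⟨V1, V2, hV1, hV2, hm1, hm2, hd⟩ := hT2X.t2 hxy
    refine sep p q ((fun p' : GX G => p'.1.2) ⁻¹' V1) ((fun p' : GX G => p'.1.2) ⁻¹' V2)
      (hV1.preimage cont2) (hV2.preimage cont2) ?_ ?_ hm1 hm2 ?_
    · intro a' b' hr ha'
      show b'.1.2 ∈ V1
      rw [← hr.1]; exact ha'
    · intro a' b' hr ha'
      show b'.1.2 ∈ V2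
      rw [← hr.1]; exact ha'
    · rw [Set.eq_empty_iff_forall_notMem]
      rintro p' ⟨h1, h2⟩
      exact Set.disjoint_left.mp hd h1 h2
end

section
/- Let G be a discrete inverse semigroup. If the associated groupoid (G * X)/≡ is Hausdorff, then G is E-continuous; i.e., for every g ∈ G the pointwise supremum ⋁{1_e : e ∈ E, e ≤ g} is a continuous function on X. -/
open InverseSemigroup

variable (G : Type*) [InverseSemigroup G]

section Aux

variable {G}

lemma isg_idem_star_eq {e : G} (he : IsIdem G e) : star e = e := by
  have h1 : e * e * e = e := by rw [he, he]
  exact (star_unique e e h1 h1).symm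

lemma isg_idem_mul {e f : G} (he : IsIdem G e) (hf : IsIdem G f) : IsIdem G (e * f) := by
  set x := star (e * f) with hx
  have h1 : e * f * x * (e * f) = e * f := InverseSemigroup.mul_star_mul (e * f)
  have h2 : x * (e * f) * x = x := InverseSemigroup.star_mul_star (e * f)
  have A1 : ∀ y : G, e * (e * y) = e * y := fun y => by rw [← mul_assoc, he]
  have A2 : ∀ y : G, f * (f * y) = f * y := fun y => by rw [← mul_assoc, hf]
  have B1 : e * (f * (x * (e * f))) = e * f := by simpa only [mul_assoc] using h1
  have B2' : ∀ y : G, x * (e * (f * (x * y))) = x * y := fun y => by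
    have := congrArg (· * y) h2
    simpa only [mul_assoc] using this
  have hfxe : f * (x * e) = x := by
    apply star_unique
    · show e * f * (f * (x * e)) * (e * f) = e * f
      calc e * f * (f * (x * e)) * (e * f)
          = e * (f * (f * (x * (e * (e * f))))) := by simp only [mul_assoc]
        _ = e * (f * (x * (e * f))) := by rw [A2, A1]
        _ = e * f := B1
    · show f * (x * e) * (e * f) * (f * (x * e)) = f * (x * e)
      calc f * (x * e) * (e * f) * (f * (x * e))
          = f * (x * (e * (e * (f * (f * (x * e)))))) := by simp only [mul_assoc]
        _ = f * (x * (e * (f * (x * e)))) := by rw [A1, A2]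
        _ = f * (x * e) := by rw [B2' e]
  have hxidem : IsIdem G x := by
    show x * x = x
    have : f * (x * e) * (f * (x * e)) = x := by
      calc f * (x * e) * (f * (x * e))
          = f * (x * (e * (f * (x * e)))) := by simp only [mul_assoc]
        _ = f * (x * e) := by rw [B2' e]
        _ = x := hfxe
    rw [← hfxe]
    rw [this]
    exact hfxe.symm
  have hef : e * f = x := by
    have := star_unique x (e * f) h2 h1
    rw [isg_idem_star_eq hxidem] at this
    exact this
  show e * f * (e * f) = e * f
  rw [hef]
  exact hxidem

lemma isg_idem_comm {e f : G} (he : IsIdem G e) (hf : IsIdem G f) : e * f = f * e := by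
  have A1 : ∀ y : G, e * (e * y) = e * y := fun y => by rw [← mul_assoc, he]
  have A2 : ∀ y : G, f * (f * y) = f * y := fun y => by rw [← mul_assoc, hf]
  have hef : IsIdem G (e * f) := isg_idem_mul he hf
  have hfe : IsIdem G (f * e) := isg_idem_mul hf he
  have hef' : e * (f * (e * f)) = e * f := by
    simpa only [mul_assoc] using (show e * f * (e * f) = e * f from hef)
  have hfe' : f * (e * (f * e)) = f * e := by
    simpa only [mul_assoc] using (show f * e * (f * e) = f * e from hfe)
  have : f * e = star (e * f) := by
    apply star_unique
    · calc e * f * (f * e) * (e * f)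
          = e * (f * (f * (e * (e * f)))) := by simp only [mul_assoc]
        _ = e * (f * (e * f)) := by rw [A2, A1]
        _ = e * f := hef'
    · calc f * e * (e * f) * (f * e)
          = f * (e * (e * (f * (f * e)))) := by simp only [mul_assoc]
        _ = f * (e * (f * e)) := by rw [A1, A2]
        _ = f * e := hfe'
  rw [this, isg_idem_star_eq hef]

lemma isg_idem_mul_star (g : G) : IsIdem G (g * star g) := by
  show g * star g * (g * star g) = g * star g
  rw [← mul_assoc, InverseSemigroup.mul_star_mul]

lemma isg_idem_star_mul (g : G) : IsIdem G (star g * g) := by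
  show star g * g * (star g * g) = star g * g
  rw [← mul_assoc, InverseSemigroup.star_mul_star]

lemma isg_star_mul (g h : G) : star (g * h) = star h * star g := by
  symm
  apply star_unique
  · calc g * h * (star h * star g) * (g * h)
        = g * (h * star h * (star g * g)) * h := by simp only [mul_assoc]
      _ = g * (star g * g * (h * star h)) * h := by
          rw [isg_idem_comm (isg_idem_mul_star h) (isg_idem_star_mul g)]
      _ = g * star g * g * (h * star h * h) := by simp only [mul_assoc]
      _ = g * h := by rw [InverseSemigroup.mul_star_mul, InverseSemigroup.mul_star_mul]
  · calc star h * star g * (g * h) * (star h * star g)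
        = star h * (star g * g * (h * star h)) * star g := by simp only [mul_assoc]
      _ = star h * (h * star h * (star g * g)) * star g := by
          rw [isg_idem_comm (isg_idem_star_mul g) (isg_idem_mul_star h)]
      _ = star h * h * star h * (star g * g * star g) := by simp only [mul_assoc]
      _ = star h * star g := by
          rw [InverseSemigroup.star_mul_star, InverseSemigroup.star_mul_star]

/-- `gxRel` is an equivalence relation. -/
lemma gxRel_equiv : Equivalence (gxRel G) := by
  constructor
  · rintro ⟨⟨g, x⟩, hx⟩
    obtain ⟨e, he, hxe⟩ := x.2.2
    exact ⟨rfl, e, he, hxe, rfl⟩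
  · rintro ⟨⟨g, x⟩, hx⟩ ⟨⟨g', x'⟩, hx'⟩ ⟨h1, e, he, hxe, hge⟩
    obtain rfl : x = x' := h1
    exact ⟨rfl, e, he, hxe, hge.symm⟩
  · rintro ⟨⟨g, x⟩, hx⟩ ⟨⟨g', x'⟩, hx'⟩ ⟨⟨g'', x''⟩, hx''⟩ ⟨h1, e, he, hxe, hge⟩
      ⟨h2, f, hf, hxf, hgf⟩
    obtain rfl : x = x' := h1
    obtain rfl : x = x'' := h2
    have hxe' : x.1 e = true := hxe
    have hxf' : x.1 f = true := hxf
    have hge' : g * e = g' * e := hge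
    have hgf' : g' * f = g'' * f := hgf
    refine ⟨rfl, e * f, isg_idem_mul he hf, ?_, ?_⟩
    · show x.1 (e * f) = true
      rw [x.2.1 e f he hf, hxe', hxf']
      rfl
    · show g * (e * f) = g'' * (e * f)
      calc g * (e * f) = g * e * f := (mul_assoc ..).symm
        _ = g' * e * f := by rw [hge']
        _ = g' * (f * e) := by rw [mul_assoc, isg_idem_comm he hf]
        _ = g' * f * e := (mul_assoc ..).symm
        _ = g'' * f * e := by rw [hgf']
        _ = g'' * (e * f) := by rw [mul_assoc, isg_idem_comm hf he]

/-- For an idempotent `e` with `e = g * e`, we also have `e = (g* g) * e`. -/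
lemma isg_key {g e : G} (he : IsIdem G e) (hge : e = g * e) : e = star g * g * e := by
  have hestar : e * star g = e := by
    conv_rhs => rw [← isg_idem_star_eq he, hge, isg_star_mul, isg_idem_star_eq he]
  have h1 : e = e * (star g * g) * e := by
    calc e = e * e := he.symm
      _ = e * star g * (g * e) := by rw [hestar, ← hge]
      _ = e * (star g * g) * e := by simp only [mul_assoc]
  rw [isg_idem_comm he (isg_idem_star_mul g), mul_assoc, he] at h1
  exact h1

end Aux

/-- If the groupoid `(G * X)/≡` associated to a discrete inverse semigroup `G` is
Hausdorff, then `G` is `E`-continuous. -/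
theorem stmt16 {G : Type*} [InverseSemigroup G] (h : T2Space (Gpd G)) :
    EContinuous G := by
  intro g
  set S : Set (SgChar G) := {x | ∃ e : G, IsIdem G e ∧ e = g * e ∧ x.1 e = true} with hS
  have hfidem : IsIdem G (star g * g) := isg_idem_star_mul g
  -- evaluation maps are continuous
  have heval : ∀ e : G, Continuous (fun x : SgChar G => x.1 e) :=
    fun e => (continuous_apply e).comp continuous_induced_dom
  -- every x ∈ S has x (g* g) = true
  have hSf : ∀ x ∈ S, x.1 (star g * g) = true := by
    rintro x ⟨e, he, hge, hxe⟩
    have h1 := isg_key he hge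
    have h2 := x.2.1 (star g * g) e hfidem he
    rw [← h1, hxe] at h2
    simpa using h2
  -- S is open
  have hSopen : IsOpen S := by
    have hrw : S = ⋃ e ∈ {e : G | IsIdem G e ∧ e = g * e}, {x : SgChar G | x.1 e = true} := by
      ext x
      simp only [hS, Set.mem_setOf_eq, Set.mem_iUnion]
      tauto
    rw [hrw]
    exact isOpen_biUnion fun e _ =>
      IsOpen.preimage (heval e) (isOpen_discrete {true})
  -- S is closed
  have hSclosed : IsClosed S := by
    apply isClosed_of_closure_subset
    intro x hxcl
    by_contra hxS
    -- x (g* g) = true since the corresponding set is closed and contains S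
    have hC : IsClosed {y : SgChar G | y.1 (star g * g) = true} :=
      IsClosed.preimage (heval (star g * g)) (isClosed_discrete {true})
    have hxf : x.1 (star g * g) = true :=
      (hC.closure_subset_iff.mpr fun y hy => hSf y hy) hxcl
    -- the two points of GX
    have hp1 : x.1 (star g * g) = true := hxf
    have hp2 : x.1 (star (star g * g) * (star g * g)) = true := by
      rw [isg_idem_star_eq hfidem, hfidem]; exact hxf
    set p₁ : GX G := ⟨(g, x), hp1⟩ with hp₁
    set p₂ : GX G := ⟨(star g * g, x), hp2⟩ with hp₂
    -- they are distinct in the quotient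
    have hne : Quot.mk (gxRel G) p₁ ≠ Quot.mk (gxRel G) p₂ := by
      intro heq
      have hrel : gxRel G p₁ p₂ := by
        rw [Quot.eq] at heq
        exact ((gxRel_equiv (G := G)).eqvGen_iff).mp heq
      obtain ⟨-, e, he, hxe, hge⟩ := hrel
      have hxe' : x.1 e = true := hxe
      have hge' : g * e = star g * g * e := hge
      refine hxS ⟨star g * g * e, isg_idem_mul hfidem he, ?_, ?_⟩
      · have h3 : g * (star g * g * e) = g * e := by
          rw [← mul_assoc, ← mul_assoc, InverseSemigroup.mul_star_mul]
        rw [h3, hge']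
      · rw [x.2.1 (star g * g) e hfidem he, hxf, hxe']
        rfl
    obtain ⟨U, V, hU, hV, hmU, hmV, hUV⟩ := h.t2 hne
    -- pull back the open sets to GX, then to the product
    letI : TopologicalSpace G := ⊥
    have hq : Continuous (Quot.mk (gxRel G)) := continuous_quot_mk
    have hU' : IsOpen (Quot.mk (gxRel G) ⁻¹' U) := hU.preimage hq
    have hV' : IsOpen (Quot.mk (gxRel G) ⁻¹' V) := hV.preimage hq
    rw [isOpen_induced_iff] at hU' hV'
    obtain ⟨W₁, hW₁, hWU⟩ := hU'
    obtain ⟨W₂, hW₂, hWV⟩ := hV'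
    have hmemW₁ : ((g, x) : G × SgChar G) ∈ W₁ := by
      have : p₁ ∈ Subtype.val ⁻¹' W₁ := hWU ▸ hmU
      exact this
    have hmemW₂ : ((star g * g, x) : G × SgChar G) ∈ W₂ := by
      have : p₂ ∈ Subtype.val ⁻¹' W₂ := hWV ▸ hmV
      exact this
    obtain ⟨u₁, v₁, hu₁, hv₁, hgu₁, hxv₁, hsub₁⟩ := isOpen_prod_iff.mp hW₁ g x hmemW₁
    obtain ⟨u₂, v₂, hu₂, hv₂, hfu₂, hxv₂, hsub₂⟩ :=
      isOpen_prod_iff.mp hW₂ (star g * g) x hmemW₂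
    -- find y ∈ v₁ ∩ v₂ ∩ S
    have hnhds : v₁ ∩ v₂ ∈ nhds x := Filter.inter_mem (hv₁.mem_nhds hxv₁) (hv₂.mem_nhds hxv₂)
    obtain ⟨y, ⟨hyv₁, hyv₂⟩, hyS⟩ := mem_closure_iff_nhds.mp hxcl _ hnhds
    obtain ⟨e, he, hge, hye⟩ := hyS
    have hyf : y.1 (star g * g) = true := hSf y ⟨e, he, hge, hye⟩
    have hyq1 : y.1 (star g * g) = true := hyf
    have hyq2 : y.1 (star (star g * g) * (star g * g)) = true := by
      rw [isg_idem_star_eq hfidem, hfidem]; exact hyf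
    set q₁ : GX G := ⟨(g, y), hyq1⟩ with hq₁
    set q₂ : GX G := ⟨(star g * g, y), hyq2⟩ with hq₂
    have hq₁U : Quot.mk (gxRel G) q₁ ∈ U := by
      have hmem : q₁ ∈ Subtype.val ⁻¹' W₁ := hsub₁ ⟨hgu₁, hyv₁⟩
      exact (Set.ext_iff.mp hWU q₁).mp hmem
    have hq₂V : Quot.mk (gxRel G) q₂ ∈ V := by
      have hmem : q₂ ∈ Subtype.val ⁻¹' W₂ := hsub₂ ⟨hfu₂, hyv₂⟩
      exact (Set.ext_iff.mp hWV q₂).mp hmem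
    have hrel : gxRel G q₁ q₂ := by
      refine ⟨rfl, e, he, hye, ?_⟩
      show g * e = star g * g * e
      rw [← hge, ← isg_key he hge]
    have heq : Quot.mk (gxRel G) q₁ = Quot.mk (gxRel G) q₂ := Quot.sound hrel
    exact Set.disjoint_iff.mp hUV ⟨hq₁U, heq ▸ hq₂V⟩
  -- conclude: the indicator of a clopen set is continuous
  have hclopen : IsClopen S := ⟨hSclosed, hSopen⟩
  have hind : S.indicator (fun _ => (1 : ℝ)) =
      (fun b : Bool => if b then (1 : ℝ) else 0) ∘ S.boolIndicator := by
    ext x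
    by_cases hx : x ∈ S
    · simp [Set.indicator_of_mem hx, Set.boolIndicator, hx]
    · simp [Set.indicator_of_notMem hx, Set.boolIndicator, hx]
  rw [hind]
  exact (continuous_of_discreteTopology).comp
    ((continuous_boolIndicator_iff_isClopen S).mpr hclopen)
end

section
/- An inverse semigroup G is E-continuous if and only if its associated groupoid (G * X)/≡ is Hausdorff. -/
open InverseSemigroup

variable (G : Type*) [InverseSemigroup G]

namespace ISHelp

variable {G : Type*} [InverseSemigroup G]

local notation "σ" => InverseSemigroup.star

lemma star_star (g : G) : σ (σ g) = g :=
  (InverseSemigroup.star_unique (σ g) g (InverseSemigroup.star_mul_star g)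
    (InverseSemigroup.mul_star_mul g)).symm

lemma star_of_idem {e : G} (he : IsIdem G e) : σ e = e := by
  have : e * e * e = e := by rw [he, he]
  exact (InverseSemigroup.star_unique e e this this).symm

lemma isIdem_star_mul (g : G) : IsIdem G (σ g * g) := by
  show σ g * g * (σ g * g) = σ g * g
  rw [← mul_assoc, InverseSemigroup.star_mul_star]

lemma isIdem_mul_star (g : G) : IsIdem G (g * σ g) := by
  show g * σ g * (g * σ g) = g * σ g
  rw [← mul_assoc, InverseSemigroup.mul_star_mul]

lemma idem_mul_idem {e f : G} (he : IsIdem G e) (hf : IsIdem G f) : IsIdem G (e * f) := by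
  have he' : ∀ x : G, e * (e * x) = e * x := fun x => by rw [← mul_assoc, he]
  have hf' : ∀ x : G, f * (f * x) = f * x := fun x => by rw [← mul_assoc, hf]
  obtain ⟨b, hbdef⟩ : ∃ b : G, b = σ (e * f) := ⟨_, rfl⟩
  have hb1 : e * (f * (b * (e * f))) = e * f := by
    have := InverseSemigroup.mul_star_mul (e * f)
    rw [← hbdef] at this; simpa [mul_assoc] using this
  have hb2 : b * (e * (f * b)) = b := by
    have := InverseSemigroup.star_mul_star (e * f)
    rw [← hbdef] at this; simpa [mul_assoc] using this
  have key : f * (b * e) = b := by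
    rw [hbdef]
    apply InverseSemigroup.star_unique
    · rw [← hbdef]
      show e * f * (f * (b * e)) * (e * f) = e * f
      calc e * f * (f * (b * e)) * (e * f)
          = e * (f * (f * (b * (e * (e * f))))) := by simp [mul_assoc]
        _ = e * (f * (b * (e * (e * f)))) := by rw [hf']
        _ = e * (f * (b * (e * f))) := by rw [he']
        _ = e * f := hb1
    · rw [← hbdef]
      show f * (b * e) * (e * f) * (f * (b * e)) = f * (b * e)
      calc f * (b * e) * (e * f) * (f * (b * e))
          = f * (b * (e * (e * (f * (f * (b * e)))))) := by simp [mul_assoc]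
        _ = f * (b * (e * (e * (f * (b * e))))) := by rw [hf']
        _ = f * (b * (e * (f * (b * e)))) := by rw [he']
        _ = f * (b * (e * (f * b)) * e) := by simp [mul_assoc]
        _ = f * (b * e) := by rw [hb2]
  have hbidem : IsIdem G b := by
    show b * b = b
    conv_lhs => rw [← key]
    calc f * (b * e) * (f * (b * e))
        = f * (b * (e * (f * (b * e)))) := by simp [mul_assoc]
      _ = f * (b * (e * (f * b)) * e) := by simp [mul_assoc]
      _ = f * (b * e) := by rw [hb2]
      _ = b := key
  have hfin : e * f = b := by
    have h2 := star_of_idem hbidem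
    rw [hbdef, star_star] at h2
    exact h2.trans hbdef.symm
  show e * f * (e * f) = e * f
  rw [hfin, hbidem]

lemma idem_comm {e f : G} (he : IsIdem G e) (hf : IsIdem G f) : e * f = f * e := by
  have he' : ∀ x : G, e * (e * x) = e * x := fun x => by rw [← mul_assoc, he]
  have hf' : ∀ x : G, f * (f * x) = f * x := fun x => by rw [← mul_assoc, hf]
  have hef : IsIdem G (e * f) := idem_mul_idem he hf
  have hfe : IsIdem G (f * e) := idem_mul_idem hf he
  have : f * e = σ (e * f) := by
    apply InverseSemigroup.star_unique
    · calc e * f * (f * e) * (e * f)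
          = e * (f * (f * (e * (e * f)))) := by simp [mul_assoc]
        _ = e * (f * (e * (e * f))) := by rw [hf']
        _ = e * (f * (e * f)) := by rw [he']
        _ = e * f * (e * f) := by simp [mul_assoc]
        _ = e * f := hef
    · calc f * e * (e * f) * (f * e)
          = f * (e * (e * (f * (f * e)))) := by simp [mul_assoc]
        _ = f * (e * (e * (f * e))) := by rw [hf']
        _ = f * (e * (f * e)) := by rw [he']
        _ = f * e * (f * e) := by simp [mul_assoc]
        _ = f * e := hfe
  rw [this, star_of_idem hef]

lemma star_mul (g h : G) : σ (g * h) = σ h * σ g := by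
  symm
  apply InverseSemigroup.star_unique
  · have c : h * σ h * (σ g * g) = σ g * g * (h * σ h) :=
      idem_comm (isIdem_mul_star h) (isIdem_star_mul g)
    calc g * h * (σ h * σ g) * (g * h)
        = g * (h * σ h * (σ g * g) * h) := by simp [mul_assoc]
      _ = g * (σ g * g * (h * σ h) * h) := by rw [c]
      _ = (g * σ g * g) * (h * σ h * h) := by simp [mul_assoc]
      _ = g * h := by rw [InverseSemigroup.mul_star_mul, InverseSemigroup.mul_star_mul]
  · have c : h * σ h * (σ g * g) = σ g * g * (h * σ h) :=
      idem_comm (isIdem_mul_star h) (isIdem_star_mul g)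
    calc σ h * σ g * (g * h) * (σ h * σ g)
        = σ h * (σ g * g * (h * σ h) * σ g) := by simp [mul_assoc]
      _ = σ h * (h * σ h * (σ g * g) * σ g) := by rw [c]
      _ = (σ h * h * σ h) * (σ g * g * σ g) := by simp [mul_assoc]
      _ = σ h * σ g := by
          rw [InverseSemigroup.star_mul_star, InverseSemigroup.star_mul_star]

lemma le_absorb {e g : G} (he : IsIdem G e) (hle : e = g * e) : e * (σ g * g) = e := by
  have h1 : e = e * σ g := by
    have := star_of_idem he
    conv_lhs => rw [← this, hle]
    rw [star_mul, star_of_idem he]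
  calc e * (σ g * g)
      = e * e * (σ g * g) := by rw [he]
    _ = e * (e * (σ g * g)) := by rw [mul_assoc]
    _ = e * (σ g * g * e) := by rw [idem_comm he (isIdem_star_mul g)]
    _ = (e * σ g) * (g * e) := by simp [mul_assoc]
    _ = e * (g * e) := by rw [← h1]
    _ = e * e := by rw [← hle]
    _ = e := he

lemma le_absorb' {e g : G} (he : IsIdem G e) (hle : e = g * e) : σ g * g * e = e := by
  rw [← idem_comm he (isIdem_star_mul g), le_absorb he hle]

/-- If `f` is idempotent and `σg * h * f = f` then `g * f = h * f`. -/
lemma germ_of_le {f g h : G} (hf : IsIdem G f) (heq : σ g * h * f = f) :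
    g * f = h * f := by
  have hf' : ∀ x : G, f * (f * x) = f * x := fun x => by rw [← mul_assoc, hf]
  have h1 : f * (σ h * g) = f := by
    have h0 := congrArg (σ) heq
    rw [star_mul, star_mul, star_star, star_of_idem hf] at h0
    exact h0
  have hw : IsIdem G (h * f * σ h) := by
    show h * f * σ h * (h * f * σ h) = h * f * σ h
    have hc : f * (σ h * h) = σ h * h * f := idem_comm hf (isIdem_star_mul h)
    calc h * f * σ h * (h * f * σ h)
        = h * (f * (σ h * h) * (f * σ h)) := by simp [mul_assoc]
      _ = h * (σ h * h * f * (f * σ h)) := by rw [hc]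
      _ = h * (σ h * (h * (f * (f * σ h)))) := by simp [mul_assoc]
      _ = h * (σ h * (h * (f * σ h))) := by rw [hf']
      _ = h * σ h * h * (f * σ h) := by simp [mul_assoc]
      _ = h * (f * σ h) := by rw [InverseSemigroup.mul_star_mul]
      _ = h * f * σ h := by rw [mul_assoc]
  have h2 : h * f = h * f * σ h * g := by
    conv_lhs => rw [← h1]
    simp [mul_assoc]
  have hc2 : g * σ g * (h * f * σ h) = h * f * σ h * (g * σ g) :=
    idem_comm (isIdem_mul_star g) hw
  calc g * f = g * (σ g * h * f) := by rw [heq]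
    _ = g * σ g * (h * f) := by simp [mul_assoc]
    _ = g * σ g * (h * f * σ h * g) := by rw [← h2]
    _ = g * σ g * (h * f * σ h) * g := by simp [mul_assoc]
    _ = h * f * σ h * (g * σ g) * g := by rw [hc2]
    _ = h * f * σ h * (g * σ g * g) := by rw [mul_assoc]
    _ = h * f * σ h * g := by rw [InverseSemigroup.mul_star_mul]
    _ = h * f := by rw [← h2]

/-- If `e` is idempotent and `g * e = h * e` then `f := e * (σg*g) * (σh*h)` is an
idempotent with `σg * h * f = f`. -/
lemma le_of_germ {e g h : G} (he : IsIdem G e) (heq : g * e = h * e) :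
    IsIdem G (e * (σ g * g) * (σ h * h)) ∧
      σ g * h * (e * (σ g * g) * (σ h * h)) = e * (σ g * g) * (σ h * h) := by
  refine ⟨idem_mul_idem (idem_mul_idem he (isIdem_star_mul g)) (isIdem_star_mul h), ?_⟩
  have hc : e * (σ g * g) = σ g * g * e := idem_comm he (isIdem_star_mul g)
  calc σ g * h * (e * (σ g * g) * (σ h * h))
      = σ g * (h * e) * ((σ g * g) * (σ h * h)) := by simp [mul_assoc]
    _ = σ g * (g * e) * ((σ g * g) * (σ h * h)) := by rw [← heq]
    _ = σ g * g * e * (σ g * g) * (σ h * h) := by simp [mul_assoc]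
    _ = e * (σ g * g) * (σ g * g) * (σ h * h) := by rw [← hc]
    _ = e * ((σ g * g) * (σ g * g)) * (σ h * h) := by simp [mul_assoc]
    _ = e * (σ g * g) * (σ h * h) := by rw [isIdem_star_mul g]

/-! ### Topological helpers -/

lemma char_mul (x : SgChar G) {e f : G} (he : IsIdem G e) (hf : IsIdem G f) :
    x.1 (e * f) = (x.1 e && x.1 f) := x.2.1 e f he hf

lemma cont_eval (e : G) : Continuous fun x : SgChar G => x.1 e :=
  (continuous_apply e).comp continuous_induced_dom

lemma isClopen_D (e : G) : IsClopen {x : SgChar G | x.1 e = true} := by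
  have h : {x : SgChar G | x.1 e = true} = (fun x : SgChar G => x.1 e) ⁻¹' {true} := by
    ext y; simp
  rw [h]
  exact (isClopen_discrete _).preimage (cont_eval e)

instance : T2Space (SgChar G) :=
  Topology.IsEmbedding.t2Space (f := (Subtype.val : SgChar G → G → Bool))
    ⟨⟨rfl⟩, Subtype.val_injective⟩

lemma isOpen_basic (g : G) {N : Set (SgChar G)} (hN : IsOpen N) :
    IsOpen {p : GX G | p.1.1 = g ∧ p.1.2 ∈ N} := by
  letI : TopologicalSpace G := ⊥
  letI : DiscreteTopology G := ⟨rfl⟩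
  have h1 : IsOpen (({g} : Set G) ×ˢ N) := (isOpen_discrete _).prod hN
  have h2 : {p : GX G | p.1.1 = g ∧ p.1.2 ∈ N}
      = Subtype.val ⁻¹' (({g} : Set G) ×ˢ N) := by
    ext p
    constructor
    · rintro ⟨ha, hb⟩
      exact ⟨by rw [ha]; rfl, hb⟩
    · rintro ⟨ha, hb⟩
      exact ⟨ha, hb⟩
  rw [h2]
  exact h1.preimage continuous_induced_dom

lemma exists_basic_subset {O : Set (GX G)} (hO : IsOpen O) {p : GX G} (hp : p ∈ O) :
    ∃ N : Set (SgChar G), IsOpen N ∧ p.1.2 ∈ N ∧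
      ∀ q : GX G, q.1.1 = p.1.1 → q.1.2 ∈ N → q ∈ O := by
  letI : TopologicalSpace G := ⊥
  obtain ⟨O', hO', hpre⟩ := isOpen_induced_iff.mp hO
  have hpO' : (p.1.1, p.1.2) ∈ O' := by
    rw [← hpre] at hp
    exact hp
  obtain ⟨u, v, hu, hv, hgu, hxv, huv⟩ := isOpen_prod_iff.mp hO' p.1.1 p.1.2 hpO'
  refine ⟨v, hv, hxv, fun q hq1 hq2 => ?_⟩
  have hq : (q.1.1, q.1.2) ∈ O' := huv ⟨by rw [hq1]; exact hgu, hq2⟩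
  rw [← hpre]
  exact hq

lemma gxRel_equiv : Equivalence (gxRel G) := by
  constructor
  · intro p
    exact ⟨rfl, σ p.1.1 * p.1.1, isIdem_star_mul _, p.2, rfl⟩
  · rintro p q ⟨h1, e, he, hxe, hge⟩
    exact ⟨h1.symm, e, he, by rw [← h1]; exact hxe, hge.symm⟩
  · rintro p q r ⟨h1, e, he, hxe, hge⟩ ⟨h2, f, hfI, hxf, hhf⟩
    refine ⟨h1.trans h2, e * f, idem_mul_idem he hfI, ?_, ?_⟩
    · have hxf' : p.1.2.1 f = true := by rw [h1]; exact hxf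
      rw [char_mul _ he hfI, hxe, hxf']
      rfl
    · calc p.1.1 * (e * f) = p.1.1 * e * f := (mul_assoc _ _ _).symm
        _ = q.1.1 * e * f := by rw [hge]
        _ = q.1.1 * (e * f) := mul_assoc _ _ _
        _ = q.1.1 * (f * e) := by rw [idem_comm he hfI]
        _ = q.1.1 * f * e := (mul_assoc _ _ _).symm
        _ = r.1.1 * f * e := by rw [hhf]
        _ = r.1.1 * (f * e) := mul_assoc _ _ _
        _ = r.1.1 * (e * f) := by rw [idem_comm he hfI]

lemma mk_eq_mk {p q : GX G} :
    Quot.mk (gxRel G) p = Quot.mk (gxRel G) q ↔ gxRel G p q :=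
  Quot.eq.trans (gxRel_equiv.eqvGen_iff)

lemma isOpen_saturation {O : Set (GX G)} (hO : IsOpen O) :
    IsOpen (Quot.mk (gxRel G) ⁻¹' (Quot.mk (gxRel G) '' O)) := by
  rw [isOpen_iff_forall_mem_open]
  rintro p ⟨o, hoO, hmk⟩
  obtain ⟨hxy, e, he, hxe, hmul⟩ := mk_eq_mk.mp hmk
  obtain ⟨N, hN, hxN, hsub⟩ := exists_basic_subset hO hoO
  refine ⟨{q : GX G | q.1.1 = p.1.1 ∧ q.1.2 ∈
      (N ∩ {y : SgChar G | y.1 (σ o.1.1 * o.1.1) = true}) ∩ {y : SgChar G | y.1 e = true}},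
    ?_, ?_, ?_⟩
  · rintro q ⟨hq1, ⟨hqN, hqD⟩, hqe⟩
    refine ⟨⟨(o.1.1, q.1.2), hqD⟩, hsub _ rfl hqN, mk_eq_mk.mpr ?_⟩
    refine ⟨rfl, e, he, hqe, ?_⟩
    show o.1.1 * e = q.1.1 * e
    rw [hq1, ← hmul]
  · exact isOpen_basic _ ((hN.inter (isClopen_D _).isOpen).inter (isClopen_D e).isOpen)
  · exact ⟨rfl, ⟨by rw [← hxy]; exact hxN, by rw [← hxy]; exact o.2⟩,
      by rw [← hxy]; exact hxe⟩

/-- The second projection `Gpd G → SgChar G`. -/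
def pr2 : Gpd G → SgChar G := Quot.lift (fun p : GX G => p.1.2) (fun _ _ h => h.1)

lemma cont_pr2 : Continuous (pr2 (G := G)) := by
  apply continuous_quot_lift
  letI : TopologicalSpace G := ⊥
  exact continuous_snd.comp continuous_induced_dom

lemma closed_of_indicator {S : Set (SgChar G)}
    (h : Continuous (S.indicator fun _ => (1 : ℝ))) : IsClosed S := by
  have hs : S = (S.indicator fun _ => (1 : ℝ)) ⁻¹' {1} := by
    ext y
    by_cases hy : y ∈ S <;>
      simp [Set.indicator_apply, hy]
  rw [hs]
  exact isClosed_singleton.preimage h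

lemma indicator_cont {S : Set (SgChar G)} (h : IsClopen S) :
    Continuous (S.indicator fun _ => (1 : ℝ)) :=
  continuous_indicator (by simp [h.frontier_eq]) continuous_const.continuousOn

lemma germ_iff {g h : G} {x : SgChar G} (hg : x.1 (σ g * g) = true)
    (hh : x.1 (σ h * h) = true) :
    (∃ e, IsIdem G e ∧ x.1 e = true ∧ g * e = h * e) ↔
      (∃ e, IsIdem G e ∧ e = σ g * h * e ∧ x.1 e = true) := by
  constructor
  · rintro ⟨e, he, hxe, heq⟩
    obtain ⟨hfI, hfeq⟩ := le_of_germ he heq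
    refine ⟨e * (σ g * g) * (σ h * h), hfI, hfeq.symm, ?_⟩
    rw [char_mul x (idem_mul_idem he (isIdem_star_mul g)) (isIdem_star_mul h),
      char_mul x he (isIdem_star_mul g), hxe, hg, hh]
    rfl
  · rintro ⟨f, hfI, hfeq, hxf⟩
    exact ⟨f, hfI, hxf, germ_of_le hfI hfeq.symm⟩

lemma mem_D_of_mem_S {g : G} {x : SgChar G}
    (hx : ∃ e, IsIdem G e ∧ e = g * e ∧ x.1 e = true) : x.1 (σ g * g) = true := by
  obtain ⟨e, he, hle, hxe⟩ := hx
  have h1 : e * (σ g * g) = e := le_absorb he hle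
  have h2 := char_mul x he (isIdem_star_mul g)
  rw [h1, hxe] at h2
  simpa using h2.symm

lemma isOpen_S (g : G) :
    IsOpen {x : SgChar G | ∃ e, IsIdem G e ∧ e = g * e ∧ x.1 e = true} := by
  rw [isOpen_iff_forall_mem_open]
  rintro x ⟨e, he, hle, hxe⟩
  exact ⟨{y : SgChar G | y.1 e = true}, fun y hy => ⟨e, he, hle, hy⟩,
    (isClopen_D e).isOpen, hxe⟩

end ISHelp

open ISHelp in
/-- An inverse semigroup is `E`-continuous if and only if its associated groupoid
`(G * X)/≡` is Hausdorff. -/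
theorem stmt17 {G : Type*} [InverseSemigroup G] :
    EContinuous G ↔ T2Space (Gpd G) := by
  constructor
  · intro hE
    refine ⟨fun a b hab => ?_⟩
    obtain ⟨p, rfl⟩ := Quot.exists_rep a
    obtain ⟨q, rfl⟩ := Quot.exists_rep b
    by_cases hxy : p.1.2 = q.1.2
    · -- same character; separate using E-continuity
      set g := p.1.1 with hg
      set h := q.1.1 with hh
      set x := p.1.2 with hx
      have hclosed : IsClosed {y : SgChar G |
          ∃ e, IsIdem G e ∧ e = star g * h * e ∧ y.1 e = true} :=
        closed_of_indicator (hE (star g * h))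
      set U := {y : SgChar G | ∃ e, IsIdem G e ∧ e = star g * h * e ∧ y.1 e = true} with hU
      set W := ({y : SgChar G | y.1 (star g * g) = true} ∩
        {y : SgChar G | y.1 (star h * h) = true}) ∩ Uᶜ with hW
      have hWopen : IsOpen W :=
        ((isClopen_D _).isOpen.inter (isClopen_D _).isOpen).inter hclosed.isOpen_compl
      have hxgD : x.1 (star g * g) = true := p.2
      have hxhD : x.1 (star h * h) = true := by rw [hxy]; exact q.2
      have hxW : x ∈ W := by
        refine ⟨⟨hxgD, hxhD⟩, fun hxU => hab ?_⟩
        obtain ⟨e, he, hxe, hmul⟩ := (germ_iff hxgD hxhD).mpr hxU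
        exact Quot.sound ⟨hxy, e, he, hxe, hmul⟩
      refine ⟨Quot.mk _ '' {p' : GX G | p'.1.1 = g ∧ p'.1.2 ∈ W},
        Quot.mk _ '' {p' : GX G | p'.1.1 = h ∧ p'.1.2 ∈ W}, ?_, ?_, ?_, ?_, ?_⟩
      · exact (isQuotientMap_quot_mk).isOpen_preimage.mp
          (isOpen_saturation (isOpen_basic g hWopen))
      · exact (isQuotientMap_quot_mk).isOpen_preimage.mp
          (isOpen_saturation (isOpen_basic h hWopen))
      · exact ⟨p, ⟨rfl, hxW⟩, rfl⟩
      · exact ⟨q, ⟨rfl, by rw [← hxy]; exact hxW⟩, rfl⟩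
      · rw [Set.disjoint_left]
        rintro c ⟨p', ⟨hp1, hpW⟩, rfl⟩ ⟨q', ⟨hq1, hqW⟩, hcq⟩
        obtain ⟨hz, e, he, hze, hmul⟩ := mk_eq_mk.mp hcq.symm
        -- p'.1.2 ∈ W but p'.1.2 ∈ U, contradiction
        have hzgD : p'.1.2.1 (star g * g) = true := hpW.1.1
        have hzhD : p'.1.2.1 (star h * h) = true := hpW.1.2
        have hmul' : g * e = h * e := by rw [← hp1, ← hq1]; exact hmul
        exact hpW.2 ((germ_iff hzgD hzhD).mp ⟨e, he, hze, hmul'⟩)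
    · -- distinct characters; separate using the projection to `SgChar G`
      have hne : pr2 (Quot.mk _ p) ≠ pr2 (Quot.mk _ q) := hxy
      obtain ⟨u, v, hu, hv, hxu, hyv, huv⟩ := t2_separation hne
      exact ⟨pr2 ⁻¹' u, pr2 ⁻¹' v, hu.preimage cont_pr2, hv.preimage cont_pr2,
        hxu, hyv, huv.preimage _⟩
  · intro hT g
    have hstar : star (star g * g) * (star g * g) = star g * g := by
      rw [star_of_idem (isIdem_star_mul g)]
      exact isIdem_star_mul g
    set S := {x : SgChar G | ∃ e, IsIdem G e ∧ e = g * e ∧ x.1 e = true} with hS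
    have hclosed : IsClosed S := by
      apply isClosed_of_closure_subset
      intro x hx
      have hxD : x.1 (star g * g) = true := by
        have hsub : closure S ⊆ {y : SgChar G | y.1 (star g * g) = true} :=
          closure_minimal (fun y hy => mem_D_of_mem_S hy) (isClopen_D _).isClosed
        exact hsub hx
      by_contra hxS
      set p : GX G := ⟨(g, x), hxD⟩ with hp
      set p0 : GX G := ⟨(star g * g, x), by show x.1 _ = true; rw [hstar]; exact hxD⟩
        with hp0
      have hne : Quot.mk (gxRel G) p ≠ Quot.mk (gxRel G) p0 := by
        intro hcon
        obtain ⟨-, e, he, hxe, hmul⟩ := mk_eq_mk.mp hcon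
        refine hxS ⟨star g * g * e, idem_mul_idem (isIdem_star_mul g) he, ?_, ?_⟩
        · have h5 : g * (star g * g * e) = star g * g * e := by
            calc g * (star g * g * e) = g * star g * g * e := by simp [mul_assoc]
              _ = g * e := by rw [InverseSemigroup.mul_star_mul]
              _ = star g * g * e := hmul
          exact h5.symm
        · rw [char_mul x (isIdem_star_mul g) he, hxD, hxe]
          rfl
      obtain ⟨A, B, hA, hB, hpA, hp0B, hAB⟩ := t2_separation hne
      obtain ⟨N1, hN1, hxN1, hsub1⟩ :=
        exists_basic_subset (hA.preimage continuous_quot_mk) hpA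
      obtain ⟨N2, hN2, hxN2, hsub2⟩ :=
        exists_basic_subset (hB.preimage continuous_quot_mk) hp0B
      obtain ⟨y, hyN, hyS⟩ :=
        mem_closure_iff.mp hx (N1 ∩ N2) (hN1.inter hN2) ⟨hxN1, hxN2⟩
      have hyD : y.1 (star g * g) = true := mem_D_of_mem_S hyS
      set p' : GX G := ⟨(g, y), hyD⟩ with hp'
      set p0' : GX G := ⟨(star g * g, y), by show y.1 _ = true; rw [hstar]; exact hyD⟩
        with hp0'
      have h1 : Quot.mk (gxRel G) p' ∈ A := hsub1 p' rfl hyN.1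
      have h2 : Quot.mk (gxRel G) p0' ∈ B := hsub2 p0' rfl hyN.2
      have heq : Quot.mk (gxRel G) p' = Quot.mk (gxRel G) p0' := by
        obtain ⟨e, he, hle, hye⟩ := hyS
        apply Quot.sound
        refine ⟨rfl, e, he, hye, ?_⟩
        show g * e = star g * g * e
        rw [← hle]
        exact (le_absorb' he hle).symm
      exact Set.disjoint_left.mp hAB (heq ▸ h1) h2
    exact indicator_cont ⟨hclosed, isOpen_S g⟩
end

section
/- In the inverse semigroup G with presentation ⟨t, l, e | tl = lt, t*l = lt*, te = e, t*e = e⟩, the projections pₙ := lⁿ e e* (l*)ⁿ for n ≥ 0 are pairwise incomparable (pₙ ≤ pₘ implies n = m), and each satisfies t pₙ = pₙ, i.e., pₙ ≤ t for all n. -/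
open InverseSemigroup

/-- The projections `pₙ = lⁿ (e e*) (l*)ⁿ`. -/
def projSeq {G : Type*} [InverseSemigroup G] (l e : G) : ℕ → G
  | 0 => e * star e
  | n + 1 => l * projSeq l e n * star l

/-- Partial injective functions on ℕ (the symmetric inverse monoid). -/
def PInj : Type := {f : ℕ → Option ℕ // ∀ a b c, f a = some c → f b = some c → a = b}

namespace PInj

instance : Mul PInj :=
  ⟨fun f g => ⟨fun n => (g.1 n).bind f.1, by
    intro a b c ha hb
    rw [Option.bind_eq_some_iff] at ha hb
    obtain ⟨x, hx, hfx⟩ := ha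
    obtain ⟨y, hy, hfy⟩ := hb
    have : x = y := f.2 _ _ _ hfx hfy
    exact g.2 _ _ _ hx (this ▸ hy)⟩⟩

lemma mul_val (f g : PInj) (n : ℕ) : (f * g).1 n = (g.1 n).bind f.1 := rfl

open Classical in
noncomputable def pstarFun (f : ℕ → Option ℕ) : ℕ → Option ℕ :=
  fun m => if h : ∃ n, f n = some m then some h.choose else none

lemma pstarFun_some {f : ℕ → Option ℕ} {m n : ℕ} (hm : pstarFun f m = some n) :
    f n = some m := by
  unfold pstarFun at hm
  split at hm
  · rename_i hex
    have := hex.choose_spec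
    rwa [Option.some_inj.mp hm] at this
  · exact absurd hm (by simp)

noncomputable def pstar (f : PInj) : PInj :=
  ⟨pstarFun f.1, by
    intro a b c ha hb
    have e1 := pstarFun_some ha
    have e2 := pstarFun_some hb
    exact Option.some_inj.mp (e1 ▸ e2)⟩

lemma pstar_eq_some {f : PInj} {m n : ℕ} : (pstar f).1 m = some n ↔ f.1 n = some m := by
  constructor
  · exact pstarFun_some
  · intro h
    show pstarFun f.1 m = some n
    unfold pstarFun
    have hex : ∃ k, f.1 k = some m := ⟨n, h⟩
    rw [dif_pos hex]
    exact congrArg some (f.2 _ _ _ hex.choose_spec h)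

noncomputable instance instIS : InverseSemigroup PInj where
  mul_assoc := by
    intro a b c
    apply Subtype.ext; funext n
    show (c.1 n).bind (a * b).1 = ((c.1 n).bind b.1).bind a.1
    cases hc : c.1 n <;> simp [mul_val]
  star := pstar
  mul_star_mul := by
    intro f
    apply Subtype.ext; funext n
    show (f.1 n).bind (fun m => ((pstar f).1 m).bind f.1) = f.1 n
    cases hf : f.1 n with
    | none => simp
    | some m =>
      rw [Option.bind_some, pstar_eq_some.mpr hf, Option.bind_some, hf]
  star_mul_star := by
    intro f
    apply Subtype.ext; funext m
    show ((pstar f).1 m).bind (fun x => (f.1 x).bind (pstar f).1) = (pstar f).1 m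
    cases hs : (pstar f).1 m with
    | none => simp
    | some n =>
      have hf : f.1 n = some m := pstar_eq_some.mp hs
      rw [Option.bind_some, hf, Option.bind_some, hs]
  star_unique := by
    intro f h hfhf hhfh
    apply Subtype.ext; funext m
    cases hh : h.1 m with
    | some n =>
      have key : (f.1 n).bind h.1 = some n := by
        have := congrArg (fun x => x.1 m) hhfh
        simp only [mul_val, hh, Option.bind_some] at this
        exact this
      rw [Option.bind_eq_some_iff] at key
      obtain ⟨k, hfn, hhk⟩ := key
      have hk : k = m := h.2 _ _ _ hhk hh
      subst hk
      exact (pstar_eq_some.mpr hfn).symm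
    | none =>
      cases hs : (pstar f).1 m with
      | none => rfl
      | some n =>
        have hfn : f.1 n = some m := pstar_eq_some.mp hs
        have key := congrArg (fun x => x.1 n) hfhf
        simp only [mul_val, hfn, hh, Option.bind_some, Option.bind_none] at key
        exact absurd key (by simp)

def tH : PInj := ⟨fun n => some n, by intro a b c ha hb; simp_all⟩

def lH : PInj := ⟨fun n => some (n + 1), by intro a b c ha hb; simp_all; omega⟩

def pH (n : ℕ) : PInj :=
  ⟨fun k => if k = n then some n else none, by
    intro a b c ha hb
    by_cases h1 : a = n <;> by_cases h2 : b = n <;> simp [h1, h2] at ha hb <;> omega⟩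

def rH : PInj :=
  ⟨fun k => if k = 0 then none else some (k - 1), by
    intro a b c ha hb
    by_cases h1 : a = 0 <;> by_cases h2 : b = 0 <;> simp [h1, h2] at ha hb <;> omega⟩

lemma tH_mul (f : PInj) : tH * f = f := by
  apply Subtype.ext; funext n
  show (f.1 n).bind tH.1 = f.1 n
  cases f.1 n <;> rfl

lemma mul_tH (f : PInj) : f * tH = f := by
  apply Subtype.ext; funext n
  show (tH.1 n).bind f.1 = f.1 n
  rfl

lemma star_tH : star tH = tH :=
  (star_unique tH tH (by rw [tH_mul, tH_mul]) (by rw [tH_mul, tH_mul])).symm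

lemma pH_mul_pH (n : ℕ) : pH n * pH n = pH n := by
  apply Subtype.ext; funext k
  show ((pH n).1 k).bind (pH n).1 = (pH n).1 k
  by_cases h : k = n <;> simp [pH, h]

lemma star_pH (n : ℕ) : star (pH n) = pH n :=
  (star_unique (pH n) (pH n) (by rw [pH_mul_pH, pH_mul_pH])
    (by rw [pH_mul_pH, pH_mul_pH])).symm

lemma star_lH : star lH = rH := by
  refine (star_unique lH rH ?_ ?_).symm
  · apply Subtype.ext; funext n
    show (lH.1 n).bind (fun x => (rH.1 x).bind lH.1) = lH.1 n
    simp [lH, rH]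
  · apply Subtype.ext; funext k
    show (rH.1 k).bind (fun x => (lH.1 x).bind rH.1) = rH.1 k
    by_cases h : k = 0 <;> simp [rH, lH, h]

lemma lH_pH_rH (n : ℕ) : lH * pH n * rH = pH (n + 1) := by
  apply Subtype.ext; funext k
  show (rH.1 k).bind (fun x => ((pH n).1 x).bind lH.1) = (pH (n + 1)).1 k
  by_cases h : k = n + 1
  · subst h; simp [rH, pH, lH]
  · by_cases h0 : k = 0
    · subst h0; simp [rH, pH]
    · have hne : ¬(k - 1 = n) := by omega
      simp [rH, pH, lH, h, h0, hne]

end PInj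

lemma hom_star {G H : Type*} [InverseSemigroup G] [InverseSemigroup H]
    (φ : G → H) (hφ : ∀ a b : G, φ (a * b) = φ a * φ b) (g : G) :
    φ (star g) = star (φ g) :=
  star_unique (φ g) (φ (star g))
    (by rw [← hφ, ← hφ, InverseSemigroup.mul_star_mul])
    (by rw [← hφ, ← hφ, InverseSemigroup.star_mul_star])

/-- In the inverse semigroup `G = ⟨t, l, e | tl = lt, t*l = lt*, te = e, t*e = e⟩`
(an inverse semigroup generated by `t, l, e` satisfying these relations and universal
for them), the projections `pₙ = lⁿ e e* (l*)ⁿ` satisfy `t pₙ = pₙ` (i.e. `pₙ ≤ t`),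
and they are pairwise incomparable: `pₙ ≤ pₘ` implies `n = m`. -/
theorem stmt18 {G : Type*} [InverseSemigroup G] (t l e : G)
    (h1 : t * l = l * t) (h2 : star t * l = l * star t)
    (h3 : t * e = e) (h4 : star t * e = e)
    (huniv : ∀ (H : Type) (_ : InverseSemigroup H) (t' l' e' : H),
      t' * l' = l' * t' → star t' * l' = l' * star t' → t' * e' = e' →
      star t' * e' = e' →
      ∃ φ : G → H, (∀ a b : G, φ (a * b) = φ a * φ b) ∧
        φ t = t' ∧ φ l = l' ∧ φ e = e') :
    (∀ n : ℕ, t * projSeq l e n = projSeq l e n) ∧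
    (∀ n m : ℕ, projSeq l e n = projSeq l e m * projSeq l e n → n = m) := by
  constructor
  · intro n
    induction n with
    | zero =>
      show t * (e * star e) = e * star e
      rw [← mul_assoc, h3]
    | succ n ih =>
      show t * (l * projSeq l e n * star l) = l * projSeq l e n * star l
      rw [← mul_assoc, ← mul_assoc, h1, mul_assoc l t, ih]
  · intro n m hnm
    obtain ⟨φ, hφ, hφt, hφl, hφe⟩ :=
      huniv PInj PInj.instIS PInj.tH PInj.lH (PInj.pH 0)
        (by rw [PInj.tH_mul, PInj.mul_tH])
        (by rw [PInj.star_tH, PInj.tH_mul, PInj.mul_tH])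
        (PInj.tH_mul _)
        (by rw [PInj.star_tH]; exact PInj.tH_mul _)
    have hp : ∀ k, φ (projSeq l e k) = PInj.pH k := by
      intro k
      induction k with
      | zero =>
        show φ (e * star e) = _
        rw [hφ, hom_star φ hφ, hφe, PInj.star_pH, PInj.pH_mul_pH]
      | succ k ih =>
        show φ (l * projSeq l e k * star l) = _
        rw [hφ, hφ, hom_star φ hφ, hφl, ih, PInj.star_lH, PInj.lH_pH_rH]
    have key := congrArg φ hnm
    simp only [hφ, hp] at key
    have key2 := congrArg (fun x : PInj => x.1 n) key
    by_cases h : n = m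
    · exact h
    · exfalso
      rw [PInj.mul_val] at key2
      have e1 : (PInj.pH n).1 n = some n := by simp [PInj.pH]
      rw [e1, Option.bind_some] at key2
      have e2 : (PInj.pH m).1 n = none := by simp [PInj.pH, h]
      rw [e2] at key2
      exact Option.some_ne_none _ key2
end
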